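/- Let $F$ be a cdf on $\mathbb{R}^d$ and $c > 0$. For $\mathbf{x} \in \mathbb{R}^d$ with $\mathbf{x} \not\le \mathbf{0}$ define $H(\mathbf{x}) = \frac{\int_0^\infty\{F(\mathbf{x} + \mathbf{1}\log t) - F(\mathbf{x}\wedge\mathbf{0} + \mathbf{1}\log t)\}\,dt}{\int_0^\infty \bar F(\mathbf{1}\log t)\,dt}$, assuming $0 < \int_0^\infty \bar F(\mathbf{1}\log t)\,dt < \infty$. Given two such cdf-s $F_1, F_2$ with normalizing constants $c_i = 1/\int_0^\infty \bar F_i(\mathbf{1}\log t)\,dt$ and corresponding $H_1, H_2$, and $p \in (0,1)$, set $F = \frac{pc_1}{pc_1 + (1-p)c_2}F_1 + \frac{(1-p)c_2}{pc_1+(1-p)c_2}F_2$. Then $pH_1 + (1-p)H_2$ equals the $H$ constructed from $F$, and the normalizing constant of $F$ is $1/(pc_1 + (1-p)c_2)^{-1}$, i.e., $\int_0^\infty \bar F(\mathbf{1}\log t)\,dt = 1/(pc_1+(1-p)c_2)$. -/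

import Mathlib

open MeasureTheory Real Set

lemma gp_aux_integrable {d : ℕ} (F1 : (Fin d → ℝ) → ℝ)
    (hmono : Monotone F1) (hrange : ∀ y, 0 ≤ F1 y ∧ F1 y ≤ 1)
    (hInt : IntegrableOn (fun t => 1 - F1 (fun _ => Real.log t)) (Ioi (0 : ℝ)))
    (x : Fin d → ℝ) (j : Fin d) :
    IntegrableOn (fun t => F1 (fun j => x j + Real.log t)
      - F1 (fun j => min (x j) 0 + Real.log t)) (Ioi (0 : ℝ)) := by
  have hne : (Finset.univ : Finset (Fin d)).Nonempty := ⟨j, Finset.mem_univ j⟩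
  set M : ℝ := Finset.univ.inf' hne (fun j => min (x j) 0) with hM
  have hMle : ∀ i, M ≤ min (x i) 0 := fun i => Finset.inf'_le _ (Finset.mem_univ i)
  have hg : IntegrableOn (fun t => 1 - F1 (fun _ => Real.log (Real.exp M * t))) (Ioi (0 : ℝ)) := by
    have := (integrableOn_Ioi_comp_mul_left_iff
      (fun t => 1 - F1 (fun _ => Real.log t)) 0 (Real.exp_pos M)).2
    rw [mul_zero] at this
    exact this hInt
  have hmeas1 : AEMeasurable (fun t => F1 (fun j => x j + Real.log t))
      ((volume : Measure ℝ).restrict (Ioi 0)) := by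
    apply aemeasurable_restrict_of_monotoneOn measurableSet_Ioi
    intro s hs t ht hst
    exact hmono fun i => by simpa using Real.log_le_log (by exact hs) hst
  have hmeas2 : AEMeasurable (fun t => F1 (fun j => min (x j) 0 + Real.log t))
      ((volume : Measure ℝ).restrict (Ioi 0)) := by
    apply aemeasurable_restrict_of_monotoneOn measurableSet_Ioi
    intro s hs t ht hst
    exact hmono fun i => by simpa using Real.log_le_log (by exact hs) hst
  apply Integrable.mono' hg ((hmeas1.sub hmeas2).aestronglyMeasurable)
  filter_upwards [ae_restrict_mem measurableSet_Ioi] with t ht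
  have hd : 0 ≤ F1 (fun j => x j + Real.log t) - F1 (fun j => min (x j) 0 + Real.log t) := by
    have := hmono (fun i => by
      have : min (x i) 0 ≤ x i := min_le_left _ _
      exact add_le_add_left this (Real.log t) : (fun j => min (x j) 0 + Real.log t) ≤ _)
    linarith
  rw [Real.norm_eq_abs, Pi.sub_apply, abs_of_nonneg hd]
  have hlog : Real.log (Real.exp M * t) = M + Real.log t := by
    rw [Real.log_mul (Real.exp_ne_zero M) (ne_of_gt ht), Real.log_exp]
  have h1 : F1 (fun _ => Real.log (Real.exp M * t)) ≤ F1 (fun j => min (x j) 0 + Real.log t) := by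
    apply hmono
    intro i
    rw [hlog]
    exact add_le_add_left (hMle i) _
  have h2 := (hrange (fun j => x j + Real.log t)).2
  linarith

theorem gp_mixture_closure
    (d : ℕ) (F1 F2 F : (Fin d → ℝ) → ℝ)
    (hF1mono : Monotone F1) (hF2mono : Monotone F2)
    (hF1range : ∀ y, 0 ≤ F1 y ∧ F1 y ≤ 1) (hF2range : ∀ y, 0 ≤ F2 y ∧ F2 y ≤ 1)
    (hInt1 : IntegrableOn (fun t => 1 - F1 (fun _ => Real.log t)) (Ioi (0 : ℝ)))
    (hInt2 : IntegrableOn (fun t => 1 - F2 (fun _ => Real.log t)) (Ioi (0 : ℝ)))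
    (hpos1 : 0 < ∫ t in Ioi (0 : ℝ), (1 - F1 (fun _ => Real.log t)))
    (hpos2 : 0 < ∫ t in Ioi (0 : ℝ), (1 - F2 (fun _ => Real.log t)))
    (c1 c2 p : ℝ) (hp : 0 < p) (hp1 : p < 1)
    (hc1 : c1 = (∫ t in Ioi (0 : ℝ), (1 - F1 (fun _ => Real.log t)))⁻¹)
    (hc2 : c2 = (∫ t in Ioi (0 : ℝ), (1 - F2 (fun _ => Real.log t)))⁻¹)
    (hF : ∀ y, F y = (p * c1 / (p * c1 + (1 - p) * c2)) * F1 y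
        + ((1 - p) * c2 / (p * c1 + (1 - p) * c2)) * F2 y)
    (H1 H2 : (Fin d → ℝ) → ℝ)
    (hH1 : ∀ x, H1 x = c1 * ∫ t in Ioi (0 : ℝ),
        (F1 (fun j => x j + Real.log t) - F1 (fun j => min (x j) 0 + Real.log t)))
    (hH2 : ∀ x, H2 x = c2 * ∫ t in Ioi (0 : ℝ),
        (F2 (fun j => x j + Real.log t) - F2 (fun j => min (x j) 0 + Real.log t))) :
    (∀ x : Fin d → ℝ, ¬ x ≤ 0 →
      p * H1 x + (1 - p) * H2 x
        = (p * c1 + (1 - p) * c2) * ∫ t in Ioi (0 : ℝ),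
            (F (fun j => x j + Real.log t) - F (fun j => min (x j) 0 + Real.log t))) ∧
    (∫ t in Ioi (0 : ℝ), (1 - F (fun _ => Real.log t))
        = 1 / (p * c1 + (1 - p) * c2)) := by
  have hc1pos : 0 < c1 := by rw [hc1]; exact inv_pos.2 hpos1
  have hc2pos : 0 < c2 := by rw [hc2]; exact inv_pos.2 hpos2
  have hS : 0 < p * c1 + (1 - p) * c2 := by nlinarith
  set S := p * c1 + (1 - p) * c2 with hSdef
  have hSne : S ≠ 0 := ne_of_gt hS
  set a1 := p * c1 / S with ha1
  set a2 := (1 - p) * c2 / S with ha2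
  have ha12 : a1 + a2 = 1 := by rw [ha1, ha2, ← add_div]; exact div_self hSne
  constructor
  · intro x hx
    obtain ⟨j, hj⟩ : ∃ j, ¬ x j ≤ 0 := by
      by_contra h; push_neg at h
      exact hx fun i => h i
    have hI1 := gp_aux_integrable F1 hF1mono hF1range hInt1 x j
    have hI2 := gp_aux_integrable F2 hF2mono hF2range hInt2 x j
    have heq : ∀ t : ℝ, F (fun j => x j + Real.log t) - F (fun j => min (x j) 0 + Real.log t)
        = a1 * (F1 (fun j => x j + Real.log t) - F1 (fun j => min (x j) 0 + Real.log t))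
        + a2 * (F2 (fun j => x j + Real.log t) - F2 (fun j => min (x j) 0 + Real.log t)) := by
      intro t; rw [hF, hF]; ring
    rw [hH1, hH2]
    simp_rw [heq]
    rw [integral_add (hI1.const_mul a1) (hI2.const_mul a2), integral_const_mul,
      integral_const_mul]
    rw [ha1, ha2]
    field_simp
  · have heq : ∀ t : ℝ, 1 - F (fun _ => Real.log t)
        = a1 * (1 - F1 (fun _ => Real.log t)) + a2 * (1 - F2 (fun _ => Real.log t)) := by
      intro t; rw [hF]
      have : a1 * 1 + a2 * 1 = 1 := by rw [mul_one, mul_one, ha12]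
      nlinarith [this]
    simp_rw [heq]
    rw [integral_add (hInt1.const_mul a1) (hInt2.const_mul a2), integral_const_mul,
      integral_const_mul]
    have e1 : ∫ t in Ioi (0 : ℝ), (1 - F1 (fun _ => Real.log t)) = c1⁻¹ := by
      rw [hc1, inv_inv]
    have e2 : ∫ t in Ioi (0 : ℝ), (1 - F2 (fun _ => Real.log t)) = c2⁻¹ := by
      rw [hc2, inv_inv]
    rw [e1, e2, ha1, ha2]
    field_simp
    ring
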